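/- Let I be any index set and {x_α}_{α ∈ I} commuting indeterminates. Then R is inner McCoy if and only if the polynomial ring R[{x_α}_{α ∈ I}] in these indeterminates is inner McCoy. -/

import Mathlib

open Polynomial AddMonoidAlgebra Pointwise

section Aux
/-- Base-`B` representations with digits `< B` are unique. -/
private lemma baseB_inj : ∀ (d B : ℕ) (v v' : Fin d → ℕ), (∀ i, v i < B) → (∀ i, v' i < B) →
    (∑ i, v i * B ^ (i : ℕ)) = (∑ i, v' i * B ^ (i : ℕ)) → v = v' := by
  intro d
  induction d with
  | zero => intro B v v' _ _ _; funext i; exact absurd i.2 (Nat.not_lt_zero _)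
  | succ d ih =>
    intro B v v' hv hv' hsum
    rw [Fin.sum_univ_succ, Fin.sum_univ_succ] at hsum
    simp only [Fin.val_zero, pow_zero, mul_one, Fin.val_succ] at hsum
    have hrw : ∀ w : Fin (d+1) → ℕ,
        (∑ i : Fin d, w i.succ * B ^ ((i : ℕ) + 1)) = B * ∑ i : Fin d, w i.succ * B ^ (i : ℕ) := by
      intro w
      rw [Finset.mul_sum]
      congr 1; funext i; ring
    rw [hrw v, hrw v'] at hsum
    have h0 : v 0 = v' 0 := by
      have h1 : v 0 = (v 0 + B * ∑ i : Fin d, v i.succ * B ^ (i : ℕ)) % B := by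
        rw [Nat.add_mul_mod_self_left, Nat.mod_eq_of_lt (hv 0)]
      have h2 : v' 0 = (v' 0 + B * ∑ i : Fin d, v' i.succ * B ^ (i : ℕ)) % B := by
        rw [Nat.add_mul_mod_self_left, Nat.mod_eq_of_lt (hv' 0)]
      rw [h1, h2, hsum]
    have hB : 0 < B := lt_of_le_of_lt (Nat.zero_le _) (hv 0)
    have htail : (fun i : Fin d => v i.succ) = fun i : Fin d => v' i.succ := by
      apply ih B _ _ (fun i => hv i.succ) (fun i => hv' i.succ)
      have := hsum
      rw [h0] at this
      have h3 := Nat.add_left_cancel this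
      exact Nat.eq_of_mul_eq_mul_left hB h3
    funext i
    refine Fin.cases h0 (fun j => ?_) i
    exact congrFun htail j

/-- For any finite set `F` of pairs (multi-exponent, `y`-degree), there is an additive
weight `w` such that `(m, n) ↦ w m + n` is injective on `F`. -/
private lemma exists_weight (I : Type*) (F : Finset ((I →₀ ℕ) × ℕ)) :
    ∃ w : (I →₀ ℕ) →+ ℕ, Set.InjOn (fun p : (I →₀ ℕ) × ℕ => w p.1 + p.2) F := by
  classical
  set s : Finset I := F.biUnion (fun p => p.1.support) with hs
  set d : ℕ := s.card with hd
  set e : {x // x ∈ s} ≃ Fin d := s.equivFin with he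
  set B : ℕ := 1 + F.sup (fun p => max p.2 (s.sup p.1)) with hB
  set c : I → ℕ := fun α => if h : α ∈ s then B ^ ((e ⟨α, h⟩ : ℕ) + 1) else 0 with hc
  refine ⟨{ toFun := fun m => m.sum fun α t => t * c α
            map_zero' := Finsupp.sum_zero_index
            map_add' := fun a b => by
              exact Finsupp.sum_add_index' (h := fun α t => t * c α)
                (fun α => zero_mul (c α)) (fun α t₁ t₂ => add_mul t₁ t₂ (c α)) }, ?_⟩
  intro p hp q hq hpq
  simp only [AddMonoidHom.coe_mk, ZeroHom.coe_mk] at hpq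
  have hsupp : ∀ r : (I →₀ ℕ) × ℕ, r ∈ F → r.1.support ⊆ s := by
    intro r hr
    exact fun α hα => Finset.mem_biUnion.2 ⟨r, hr, hα⟩
  have hw : ∀ r : (I →₀ ℕ) × ℕ, r ∈ F →
      (r.1.sum fun α t => t * c α) + r.2
        = ∑ i : Fin (d + 1),
            ((Fin.cons r.2 (fun j : Fin d => r.1 (e.symm j)) : Fin (d+1) → ℕ) i) * B ^ (i : ℕ) := by
    intro r hr
    rw [Fin.sum_univ_succ]
    simp only [Fin.cons_zero, Fin.cons_succ, Fin.val_zero, pow_zero, mul_one, Fin.val_succ]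
    rw [add_comm]
    congr 1
    rw [Finsupp.sum_of_support_subset _ (hsupp r hr) _ (fun α _ => zero_mul (c α))]
    rw [← Finset.sum_coe_sort s (fun α => r.1 α * c α)]
    refine Fintype.sum_equiv e _ _ (fun x => ?_)
    have hx : c (x : I) = B ^ ((e x : ℕ) + 1) := by
      simp only [hc]
      rw [dif_pos x.2]
    rw [hx, e.symm_apply_apply]
  have hdig : ∀ r : (I →₀ ℕ) × ℕ, r ∈ F →
      ∀ i : Fin (d + 1),
        ((Fin.cons r.2 (fun j : Fin d => r.1 (e.symm j)) : Fin (d+1) → ℕ) i) < B := by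
    intro r hr i
    have hle : max r.2 (s.sup r.1) ≤ F.sup (fun p => max p.2 (s.sup p.1)) :=
      Finset.le_sup (f := fun p : (I →₀ ℕ) × ℕ => max p.2 (s.sup p.1)) hr
    refine Fin.cases ?_ (fun j => ?_) i
    · simp only [Fin.cons_zero]
      have := le_trans (le_max_left r.2 (s.sup r.1)) hle
      omega
    · simp only [Fin.cons_succ]
      have h1 : r.1 (e.symm j : I) ≤ s.sup r.1 := Finset.le_sup (e.symm j).2
      have := le_trans (le_max_right r.2 (s.sup r.1)) hle
      omega
  have hvv := baseB_inj (d + 1) B _ _ (hdig p hp) (hdig q hq)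
    (by rw [← hw p hp, ← hw q hq]; exact hpq)
  have hn : p.2 = q.2 := by
    have := congrFun hvv 0
    simpa using this
  have hm : p.1 = q.1 := by
    ext α
    by_cases hα : α ∈ s
    · have := congrFun hvv (Fin.succ (e ⟨α, hα⟩))
      simpa using this
    · have h1 : p.1 α = 0 := Finsupp.notMem_support_iff.1 (fun hmem => hα (hsupp p hp hmem))
      have h2 : q.1 α = 0 := Finsupp.notMem_support_iff.1 (fun hmem => hα (hsupp q hq hmem))
      rw [h1, h2]
  exact Prod.ext hm hn

variable {R : Type*} [Ring R] {I : Type*}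

/-- The weight ring hom `R[{x_α}] →+* R[X]` sending a monomial `x^m` to `X^(w m)`. -/
private noncomputable def phiS (w : (I →₀ ℕ) →+ ℕ) :
    AddMonoidAlgebra R (I →₀ ℕ) →+* Polynomial R :=
  AddMonoidAlgebra.liftNCRingHom (Polynomial.C (R := R))
    { toFun := fun m => X ^ (w (Multiplicative.toAdd m))
      map_one' := by simp
      map_mul' := fun a b => by
        simp only [toAdd_mul, map_add, pow_add] }
    (fun x y => ((commute_X (C x)).symm.pow_right _))

private lemma phiS_single (w : (I →₀ ℕ) →+ ℕ) (m : I →₀ ℕ) (r : R) :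
    phiS w (AddMonoidAlgebra.single m r) = C r * X ^ (w m) := by
  simp [phiS, AddMonoidAlgebra.liftNCRingHom, AddMonoidAlgebra.liftNC_single]

/-- Substitution `R[{x_α}][y] →+* R[X]`, `x^m y^n ↦ X^(w m + n)`. -/
private noncomputable def PhiP (w : (I →₀ ℕ) →+ ℕ) :
    Polynomial (AddMonoidAlgebra R (I →₀ ℕ)) →+* Polynomial R :=
  Polynomial.eval₂RingHom' (phiS w) X (fun a => (commute_X (phiS w a)).symm)

private lemma PhiP_monomial (w : (I →₀ ℕ) →+ ℕ) (n : ℕ) (m : I →₀ ℕ) (r : R) :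
    PhiP w (Polynomial.monomial n (AddMonoidAlgebra.single m r)) = Polynomial.monomial (w m + n) r := by
  show Polynomial.eval₂ (phiS w) X (Polynomial.monomial n (AddMonoidAlgebra.single m r)) = _
  rw [Polynomial.eval₂_monomial, phiS_single, mul_assoc, ← pow_add, C_mul_X_pow_eq_monomial]

private lemma PhiP_decomp (w : (I →₀ ℕ) →+ ℕ) (p : Polynomial (AddMonoidAlgebra R (I →₀ ℕ))) :
    PhiP w p = ∑ n ∈ p.support, ∑ m ∈ (p.coeff n).coeff.support,
      Polynomial.monomial (w m + n) ((p.coeff n).coeff m) := by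
  conv_lhs => rw [p.as_sum_support]
  rw [map_sum]
  refine Finset.sum_congr rfl (fun n _ => ?_)
  have h0 : (p.coeff n : AddMonoidAlgebra R (I →₀ ℕ))
      = ∑ m ∈ (p.coeff n).coeff.support,
          (AddMonoidAlgebra.single m ((p.coeff n).coeff m) : AddMonoidAlgebra R (I →₀ ℕ)) := by
    conv_lhs => rw [← AddMonoidAlgebra.sum_coeff_single (p.coeff n)]
    rfl
  conv_lhs => rw [h0]
  rw [map_sum (Polynomial.monomial n), map_sum]
  exact Finset.sum_congr rfl (fun m _ => PhiP_monomial w n m _)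

/-- If the weight map is injective on the bi-support of `p` and `Φ p = 0`, then `p = 0`. -/
private lemma PhiP_eq_zero (w : (I →₀ ℕ) →+ ℕ) (p : Polynomial (AddMonoidAlgebra R (I →₀ ℕ)))
    (hinj : Set.InjOn (fun q : (I →₀ ℕ) × ℕ => w q.1 + q.2)
      {q : (I →₀ ℕ) × ℕ | (p.coeff q.2).coeff q.1 ≠ 0})
    (h : PhiP w p = 0) : p = 0 := by
  by_contra hp
  obtain ⟨n₀, hn₀⟩ := Polynomial.support_nonempty.2 hp
  have hc₀ : p.coeff n₀ ≠ 0 := Polynomial.mem_support_iff.1 hn₀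
  obtain ⟨m₀, hm₀⟩ := Finsupp.support_nonempty_iff.2 (mt AddMonoidAlgebra.coeff_eq_zero.1 hc₀)
  have hcm₀ : (p.coeff n₀).coeff m₀ ≠ 0 := Finsupp.mem_support_iff.1 hm₀
  have hkey : (PhiP w p).coeff (w m₀ + n₀) = (p.coeff n₀).coeff m₀ := by
    rw [PhiP_decomp]
    rw [Polynomial.finset_sum_coeff]
    rw [Finset.sum_eq_single_of_mem n₀ hn₀]
    · rw [Polynomial.finset_sum_coeff]
      rw [Finset.sum_eq_single_of_mem m₀ hm₀]
      · rw [Polynomial.coeff_monomial, if_pos rfl]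
      · intro m hm hne
        rw [Polynomial.coeff_monomial, if_neg]
        intro heq
        have hmm : ((m, n₀) : (I →₀ ℕ) × ℕ) = (m₀, n₀) :=
          hinj (Set.mem_setOf.2 (Finsupp.mem_support_iff.1 hm))
            (Set.mem_setOf.2 hcm₀) heq
        exact hne (congrArg Prod.fst hmm)
    · intro n hn hne
      rw [Polynomial.finset_sum_coeff]
      refine Finset.sum_eq_zero (fun m hm => ?_)
      rw [Polynomial.coeff_monomial, if_neg]
      intro heq
      have hmm : ((m, n) : (I →₀ ℕ) × ℕ) = (m₀, n₀) :=
        hinj (Set.mem_setOf.2 (Finsupp.mem_support_iff.1 hm))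
          (Set.mem_setOf.2 hcm₀) heq
      exact hne (congrArg Prod.snd hmm)
  rw [h] at hkey
  simp only [Polynomial.coeff_zero] at hkey
  exact hcm₀ hkey.symm

/-- The constant embedding `R[X] →+* R[{x_α}][X]`. -/
private noncomputable def iotaP :
    Polynomial R →+* Polynomial (AddMonoidAlgebra R (I →₀ ℕ)) :=
  Polynomial.mapRingHom (AddMonoidAlgebra.singleZeroRingHom)

private lemma iotaP_coeff (p : Polynomial R) (n : ℕ) :
    ((iotaP (I := I) p).coeff n) = AddMonoidAlgebra.single 0 (p.coeff n) := by
  simp [iotaP, Polynomial.coeff_map]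

private lemma key_coeff (p q : Polynomial R) (s : AddMonoidAlgebra R (I →₀ ℕ)) (n : ℕ)
    (m : I →₀ ℕ) :
    ((iotaP p * Polynomial.C s * iotaP q).coeff n).coeff m
      = (p * Polynomial.C (s.coeff m) * q).coeff n := by
  rw [Polynomial.coeff_mul, Polynomial.coeff_mul (p * Polynomial.C (s.coeff m))]
  rw [AddMonoidAlgebra.coeff_sum, Finsupp.finset_sum_apply]
  refine Finset.sum_congr rfl (fun x _ => ?_)
  rw [Polynomial.coeff_mul_C, Polynomial.coeff_mul_C, iotaP_coeff, iotaP_coeff]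
  rw [AddMonoidAlgebra.coeff_mul_single_zero, AddMonoidAlgebra.coeff_single_zero_mul]

end Aux

def IsInnerMcCoy (S : Type*) [Ring S] : Prop :=
  ∀ f g : Polynomial S, f ≠ 0 → g ≠ 0 → f * g * f = 0 →
    ∃ r : S, r ≠ 0 ∧ f * Polynomial.C r * f = 0

/-- `R` is inner McCoy iff the polynomial ring over `R` in a family `{x_α}_{α ∈ I}` of
commuting indeterminates (realized as the monoid algebra of `I →₀ ℕ` over `R`) is
inner McCoy. -/
theorem innerMcCoy_iff_mvPolynomial (R : Type*) [Ring R] (I : Type*) :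
    IsInnerMcCoy R ↔ IsInnerMcCoy (AddMonoidAlgebra R (I →₀ ℕ)) := by
  classical
  constructor
  · -- R inner McCoy → R[{x}] inner McCoy
    intro hR f g hf hg hfgf
    -- finite bi-supports
    set Tp : Polynomial (AddMonoidAlgebra R (I →₀ ℕ)) → Finset ((I →₀ ℕ) × ℕ) :=
      fun p => p.support.biUnion (fun n => (p.coeff n).coeff.support.image (fun m => (m, n))) with hTpdef
    have hTp : ∀ (p : Polynomial (AddMonoidAlgebra R (I →₀ ℕ))) (n : ℕ) (m : I →₀ ℕ),
        (p.coeff n).coeff m ≠ 0 → (m, n) ∈ Tp p := by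
      intro p n m hmn
      have hn : n ∈ p.support := Polynomial.mem_support_iff.2 (fun h => hmn (by rw [h]; rfl))
      exact Finset.mem_biUnion.2 ⟨n, hn, Finset.mem_image.2
        ⟨m, Finsupp.mem_support_iff.2 hmn, rfl⟩⟩
    set T : Finset ((I →₀ ℕ) × ℕ) := (Tp f ∪ Tp g) ∪ {(0, 0)} with hTdef
    set F : Finset ((I →₀ ℕ) × ℕ) := T + T with hFdef
    obtain ⟨w, hw⟩ := exists_weight I F
    have hz : ((0, 0) : (I →₀ ℕ) × ℕ) ∈ T := Finset.mem_union_right _ (Finset.mem_singleton_self _)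
    have hTF : ∀ t ∈ T, t ∈ F := by
      intro t ht
      have := Finset.add_mem_add ht hz
      simpa [Prod.mk_zero_zero] using this
    -- f and g have injective weights on their bi-supports
    have hsubf : {q : (I →₀ ℕ) × ℕ | (f.coeff q.2).coeff q.1 ≠ 0} ⊆ (F : Set ((I →₀ ℕ) × ℕ)) := by
      rintro ⟨m, n⟩ hq
      exact hTF _ (Finset.mem_union_left _ (Finset.mem_union_left _ (hTp f n m hq)))
    have hsubg : {q : (I →₀ ℕ) × ℕ | (g.coeff q.2).coeff q.1 ≠ 0} ⊆ (F : Set ((I →₀ ℕ) × ℕ)) := by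
      rintro ⟨m, n⟩ hq
      exact hTF _ (Finset.mem_union_left _ (Finset.mem_union_right _ (hTp g n m hq)))
    have hPf : PhiP w f ≠ 0 := fun h0 => hf (PhiP_eq_zero w f (hw.mono hsubf) h0)
    have hPg : PhiP w g ≠ 0 := fun h0 => hg (PhiP_eq_zero w g (hw.mono hsubg) h0)
    have hPprod : PhiP w f * PhiP w g * PhiP w f = 0 := by
      rw [← map_mul, ← map_mul, hfgf, map_zero]
    obtain ⟨r, hr, hrr⟩ := hR _ _ hPf hPg hPprod
    refine ⟨AddMonoidAlgebra.single 0 r, by simpa [AddMonoidAlgebra.single_eq_zero] using hr, ?_⟩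
    have hPC : PhiP w (Polynomial.C (AddMonoidAlgebra.single (0 : I →₀ ℕ) r)) = Polynomial.C r := by
      have h := PhiP_monomial w 0 (0 : I →₀ ℕ) r
      simpa using h
    have hPq : PhiP w (f * Polynomial.C (AddMonoidAlgebra.single (0 : I →₀ ℕ) r) * f) = 0 := by
      rw [map_mul, map_mul, hPC, hrr]
    refine PhiP_eq_zero w _ (hw.mono ?_) hPq
    rintro ⟨M, N⟩ hx
    have hx' : ((f * Polynomial.C (AddMonoidAlgebra.single (0 : I →₀ ℕ) r) * f).coeff N).coeff M ≠ 0 := hx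
    rw [Polynomial.coeff_mul, AddMonoidAlgebra.coeff_sum, Finsupp.finset_sum_apply] at hx'
    obtain ⟨⟨i, j⟩, hij, hterm⟩ := Finset.exists_ne_zero_of_sum_ne_zero hx'
    rw [Polynomial.coeff_mul_C] at hterm
    have hMsupp : M ∈ ((f.coeff i * AddMonoidAlgebra.single (0 : I →₀ ℕ) r) * f.coeff j).coeff.support :=
      Finsupp.mem_support_iff.2 hterm
    have h1 := AddMonoidAlgebra.support_coeff_mul_subset (f.coeff i * AddMonoidAlgebra.single (0 : I →₀ ℕ) r)
      (f.coeff j) hMsupp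
    rw [Finset.mem_add] at h1
    obtain ⟨u, hu, v, hv, huv⟩ := h1
    have h2 := AddMonoidAlgebra.support_coeff_mul_subset (f.coeff i) (AddMonoidAlgebra.single (0 : I →₀ ℕ) r) hu
    rw [Finset.mem_add] at h2
    obtain ⟨a, ha, b, hb, hab⟩ := h2
    have hb0 : b = 0 := Finset.mem_singleton.1 (Finsupp.support_single_subset hb)
    have hua : u = a := by rw [← hab, hb0, add_zero]
    have hNij : i + j = N := Finset.HasAntidiagonal.mem_antidiagonal.1 hij
    have hmem1 : ((a, i) : (I →₀ ℕ) × ℕ) ∈ T :=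
      Finset.mem_union_left _ (Finset.mem_union_left _
        (hTp f i a (Finsupp.mem_support_iff.1 ha)))
    have hmem2 : ((v, j) : (I →₀ ℕ) × ℕ) ∈ T :=
      Finset.mem_union_left _ (Finset.mem_union_left _
        (hTp f j v (Finsupp.mem_support_iff.1 hv)))
    have : ((M, N) : (I →₀ ℕ) × ℕ) = (a, i) + (v, j) := by
      rw [Prod.mk_add_mk, hNij, ← huv, hua]
    rw [this]
    exact_mod_cast Finset.add_mem_add hmem1 hmem2
  · -- R[{x}] inner McCoy → R inner McCoy
    intro hS f g hf hg hfgf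
    have hinj : Function.Injective (AddMonoidAlgebra.singleZeroRingHom :
        R →+* AddMonoidAlgebra R (I →₀ ℕ)) := by
      intro a b hab
      simpa using congrArg (fun s : AddMonoidAlgebra R (I →₀ ℕ) => s.coeff 0) hab
    have hψinj : Function.Injective (iotaP (R := R) (I := I)) :=
      Polynomial.map_injective _ hinj
    have hψf : iotaP (I := I) f ≠ 0 := fun h => hf (hψinj (by simpa using h))
    have hψg : iotaP (I := I) g ≠ 0 := fun h => hg (hψinj (by simpa using h))
    have hψ0 : iotaP (I := I) f * iotaP g * iotaP f = 0 := by
      rw [← map_mul, ← map_mul, hfgf, map_zero]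
    obtain ⟨s, hs, hfsf⟩ := hS _ _ hψf hψg hψ0
    obtain ⟨m, hm⟩ := Finsupp.support_nonempty_iff.2 (mt AddMonoidAlgebra.coeff_eq_zero.1 hs)
    refine ⟨s.coeff m, Finsupp.mem_support_iff.1 hm, ?_⟩
    ext n
    rw [Polynomial.coeff_zero, ← key_coeff f f s n m, hfsf]
    simp
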